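/- A minimal Markov basis is unique up to sign (i.e., any two minimal Markov bases coincide after possibly replacing some of their moves z by −z) if and only if for every t ∈ ℤ^d with F_t ≠ ∅, either F_t forms a single B_{|t|−1}-equivalence class or F_t has exactly two elements. -/

import Mathlib

open scoped BigOperators

section Defs

variable {ι κ : Type*} [Fintype ι]

/-- Embed a frequency vector `x ∈ ℕ^ι` into `ℤ^ι`. -/
def natToInt (x : ι → ℕ) : ι → ℤ := fun i => (x i : ℤ)

/-- The fiber of `t`: all frequency vectors `x` with `A x = t`. -/
def fiberOf (A : Matrix κ ι ℤ) (t : κ → ℤ) : Set (ι → ℕ) :=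
  {x | A.mulVec (natToInt x) = t}

/-- A move for `A`: an integer vector in the kernel of `A`. -/
def IsMove (A : Matrix κ ι ℤ) (z : ι → ℤ) : Prop := A.mulVec z = 0

/-- The positive part `z⁺` of an integer vector, as a frequency vector. -/
def posOf (z : ι → ℤ) : ι → ℕ := fun i => (z i).toNat

/-- The negative part `z⁻` of an integer vector, as a frequency vector. -/
def negOf (z : ι → ℤ) : ι → ℕ := fun i => (-z i).toNat

/-- The degree of a move: `deg z = |z⁺|`. -/
def degOf (z : ι → ℤ) : ℕ := ∑ i, posOf z i

/-- One step: add or subtract one move of `B`, staying in `ℕ^ι`. -/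
def MStep (B : Set (ι → ℤ)) (x y : ι → ℕ) : Prop :=
  ∃ z ∈ B, natToInt y = natToInt x + z ∨ natToInt y = natToInt x - z

/-- `y` is accessible from `x` by the moves of `B` (staying nonnegative throughout,
since all intermediate points are frequency vectors). -/
def Accessible (B : Set (ι → ℤ)) : (ι → ℕ) → (ι → ℕ) → Prop :=
  Relation.ReflTransGen (MStep B)

/-- A Markov basis: a finite set of moves such that every fiber forms a single
equivalence class for mutual accessibility. -/
def IsMarkovBasis (A : Matrix κ ι ℤ) (B : Set (ι → ℤ)) : Prop :=
  B.Finite ∧ (∀ z ∈ B, IsMove A z) ∧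
    ∀ t : κ → ℤ, ∀ x ∈ fiberOf A t, ∀ y ∈ fiberOf A t, Accessible B x y

/-- A minimal Markov basis: no proper subset is a Markov basis. -/
def IsMinimalMarkovBasis (A : Matrix κ ι ℤ) (B : Set (ι → ℤ)) : Prop :=
  IsMarkovBasis A B ∧ ∀ B' ⊂ B, ¬ IsMarkovBasis A B'

/-- An indispensable monomial: every Markov basis contains a move whose
positive or negative part is `x`. -/
def IsIndispensableMonomial (A : Matrix κ ι ℤ) (x : ι → ℕ) : Prop :=
  ∀ B : Set (ι → ℤ), IsMarkovBasis A B → ∃ z ∈ B, posOf z = x ∨ negOf z = x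

/-- `B_n`: the set of moves of degree at most `n`. -/
def Bmoves (A : Matrix κ ι ℤ) (n : ℕ) : Set (ι → ℤ) :=
  {z | IsMove A z ∧ degOf z ≤ n}

/-- The sample size `|t|` of a sufficient statistic `t` (well defined on nonempty
fibers under homogeneity). -/
noncomputable def sampleSize (A : Matrix κ ι ℤ) (t : κ → ℤ) : ℕ :=
  sInf {n | ∃ x ∈ fiberOf A t, ∑ i, x i = n}

/-- The `B_{|t|-1}`-equivalence classes of the fiber of `t`. -/
noncomputable def fiberClasses (A : Matrix κ ι ℤ) (t : κ → ℤ) : Set (Set (ι → ℕ)) :=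
  {C | ∃ x ∈ fiberOf A t,
    C = {y | y ∈ fiberOf A t ∧ Accessible (Bmoves A (sampleSize A t - 1)) x y}}

/-- Homogeneity: some rational vector `w` has `w ⬝ aᵢ = 1` for every column `aᵢ`. -/
def IsHomogeneousMatrix [Fintype κ] (A : Matrix κ ι ℤ) : Prop :=
  ∃ w : κ → ℚ, ∀ i : ι, ∑ j, w j * (A j i : ℚ) = 1

end Defs

/-- Two sets of moves coincide up to replacing moves `z` by `-z`. -/
def EqUpToSign {ι : Type*} (B₁ B₂ : Set (ι → ℤ)) : Prop :=
  (∀ z ∈ B₁, z ∈ B₂ ∨ -z ∈ B₂) ∧ (∀ z ∈ B₂, z ∈ B₁ ∨ -z ∈ B₁)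

namespace MarkovAux

open Relation Finset

variable {p d : ℕ} {A : Matrix (Fin d) (Fin p) ℤ}

/-! ### elementary facts -/

lemma natToInt_injective : Function.Injective (natToInt (ι := Fin p)) := by
  intro x y h
  funext i
  have := congrFun h i
  simpa [natToInt] using this

lemma posOf_sub_negOf (z : Fin p → ℤ) :
    natToInt (posOf z) - natToInt (negOf z) = z := by
  funext i
  simp only [natToInt, posOf, negOf, Pi.sub_apply]
  omega

lemma natToInt_negOf (z : Fin p → ℤ) :
    natToInt (negOf z) = natToInt (posOf z) - z := by
  have := posOf_sub_negOf z
  funext i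
  have := congrFun this i
  simp only [Pi.sub_apply] at this ⊢
  omega

lemma posOf_neg (z : Fin p → ℤ) : posOf (-z) = negOf z := by
  funext i; simp [posOf, negOf]

lemma negOf_neg (z : Fin p → ℤ) : negOf (-z) = posOf z := by
  funext i; simp [posOf, negOf]

lemma posOf_eq_zero_or_negOf_eq_zero (z : Fin p → ℤ) (i : Fin p) :
    posOf z i = 0 ∨ negOf z i = 0 := by
  simp only [posOf, negOf]; omega

lemma eq_zero_of_posOf_negOf (z : Fin p → ℤ) (h : posOf z = negOf z) : z = 0 := by
  funext i
  have h1 := congrFun h i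
  have := posOf_eq_zero_or_negOf_eq_zero z i
  simp only [posOf, negOf, Pi.zero_apply] at h1 ⊢
  omega

/-- Difference of two frequency vectors: positive and negative parts. -/
lemma posOf_diff (a b : Fin p → ℕ) (i : Fin p) :
    posOf (natToInt a - natToInt b) i = a i - b i := by
  simp only [posOf, natToInt, Pi.sub_apply]; omega

lemma negOf_diff (a b : Fin p → ℕ) (i : Fin p) :
    negOf (natToInt a - natToInt b) i = b i - a i := by
  simp only [negOf, natToInt, Pi.sub_apply]; omega

/-! ### homogeneity: sums on fibers -/

section Hom

variable {w : Fin d → ℚ} (hw : ∀ i : Fin p, ∑ j, w j * (A j i : ℚ) = 1)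

include hw

lemma sum_eq_of_mem_fiber {t : Fin d → ℤ} {x : Fin p → ℕ}
    (hx : x ∈ fiberOf A t) : ((∑ i, x i : ℕ) : ℚ) = ∑ j, w j * (t j : ℚ) := by
  have ht : ∀ j, (t j : ℚ) = ∑ i, (A j i : ℚ) * (x i : ℚ) := by
    intro j
    have := congrFun hx j
    simp only [Matrix.mulVec, dotProduct, natToInt] at this
    rw [← this]
    push_cast
    rfl
  calc ((∑ i, x i : ℕ) : ℚ) = ∑ i, (x i : ℚ) * (∑ j, w j * (A j i : ℚ)) := by
        rw [Nat.cast_sum]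
        congr 1; funext i; rw [hw i, mul_one]
    _ = ∑ i, ∑ j, w j * ((A j i : ℚ) * (x i : ℚ)) := by
        congr 1; funext i; rw [Finset.mul_sum]; congr 1; funext j; ring
    _ = ∑ j, ∑ i, w j * ((A j i : ℚ) * (x i : ℚ)) := by rw [Finset.sum_comm]
    _ = ∑ j, w j * (t j : ℚ) := by
        congr 1; funext j; rw [← Finset.mul_sum, ← ht j]

lemma sum_eq_sum_of_mem_fiber {t : Fin d → ℤ} {x y : Fin p → ℕ}
    (hx : x ∈ fiberOf A t) (hy : y ∈ fiberOf A t) : ∑ i, x i = ∑ i, y i := by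
  have h1 := sum_eq_of_mem_fiber hw hx
  have h2 := sum_eq_of_mem_fiber hw hy
  exact_mod_cast h1.trans h2.symm

lemma sampleSize_eq {t : Fin d → ℤ} {x : Fin p → ℕ} (hx : x ∈ fiberOf A t) :
    sampleSize A t = ∑ i, x i := by
  refine le_antisymm (Nat.sInf_le ⟨x, hx, rfl⟩) ?_
  refine le_csInf ⟨_, x, hx, rfl⟩ ?_
  rintro n ⟨y, hy, rfl⟩
  exact (sum_eq_sum_of_mem_fiber hw hx hy).le

lemma move_sum_zero {z : Fin p → ℤ} (hz : IsMove A z) : ∑ i, z i = 0 := by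
  have : ((∑ i, z i : ℤ) : ℚ) = 0 := by
    have h0 : ∀ j, (0 : ℚ) = ∑ i, (A j i : ℚ) * (z i : ℚ) := by
      intro j
      have := congrFun hz j
      simp only [Matrix.mulVec, dotProduct, Pi.zero_apply] at this
      rw [show (0:ℚ) = ((0:ℤ):ℚ) by norm_num, ← this]
      push_cast
      rfl
    calc ((∑ i, z i : ℤ) : ℚ) = ∑ i, (z i : ℚ) * (∑ j, w j * (A j i : ℚ)) := by
          rw [Int.cast_sum]
          congr 1; funext i; rw [hw i, mul_one]
      _ = ∑ i, ∑ j, w j * ((A j i : ℚ) * (z i : ℚ)) := by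
          congr 1; funext i; rw [Finset.mul_sum]; congr 1; funext j; ring
      _ = ∑ j, ∑ i, w j * ((A j i : ℚ) * (z i : ℚ)) := by rw [Finset.sum_comm]
      _ = ∑ j, w j * (0 : ℚ) := by
          congr 1; funext j; rw [← Finset.mul_sum, ← h0 j]
      _ = 0 := by simp
  exact_mod_cast this

lemma deg_neg_eq {z : Fin p → ℤ} (hz : IsMove A z) :
    ∑ i, negOf z i = degOf z := by
  have hsum := move_sum_zero hw hz
  have : ((∑ i, posOf z i : ℕ) : ℤ) - ((∑ i, negOf z i : ℕ) : ℤ) = ∑ i, z i := by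
    push_cast
    rw [← Finset.sum_sub_distrib]
    congr 1; funext i
    have := congrFun (posOf_sub_negOf z) i
    simpa [natToInt] using this
  rw [hsum] at this
  have : ((∑ i, posOf z i : ℕ) : ℤ) = ((∑ i, negOf z i : ℕ) : ℤ) := by omega
  exact_mod_cast this.symm

end Hom

/-! ### MStep and Accessible basics -/

lemma natToInt_add' (x r : Fin p → ℕ) : natToInt (x + r) = natToInt x + natToInt r := by
  funext i; simp [natToInt]

lemma mstep_mono {B B' : Set (Fin p → ℤ)} (hBB : B ⊆ B') {x y : Fin p → ℕ}
    (h : MStep B x y) : MStep B' x y := by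
  obtain ⟨z, hz, hh⟩ := h; exact ⟨z, hBB hz, hh⟩

lemma mstep_symm {B : Set (Fin p → ℤ)} {x y : Fin p → ℕ} (h : MStep B x y) : MStep B y x := by
  obtain ⟨z, hz, h | h⟩ := h
  · exact ⟨z, hz, Or.inr (by rw [h]; ring)⟩
  · exact ⟨z, hz, Or.inl (by rw [h]; ring)⟩

lemma accessible_symm {B : Set (Fin p → ℤ)} {x y : Fin p → ℕ} (h : Accessible B x y) :
    Accessible B y x :=
  haveI : Std.Symm (MStep B) := ⟨fun _ _ h => mstep_symm h⟩
  Relation.ReflTransGen.symmetric.symm _ _ h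

lemma accessible_trans {B : Set (Fin p → ℤ)} {x y z : Fin p → ℕ} (h : Accessible B x y)
    (h' : Accessible B y z) : Accessible B x z := Relation.ReflTransGen.trans h h'

lemma accessible_mono {B B' : Set (Fin p → ℤ)} (hBB : B ⊆ B') {x y : Fin p → ℕ}
    (h : Accessible B x y) : Accessible B' x y :=
  Relation.ReflTransGen.mono (fun _ _ h => mstep_mono hBB h) _ _ h

lemma mstep_translate {B : Set (Fin p → ℤ)} {x y : Fin p → ℕ} (r : Fin p → ℕ)
    (h : MStep B x y) : MStep B (x + r) (y + r) := by
  obtain ⟨z, hz, h | h⟩ := h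
  · exact ⟨z, hz, Or.inl (by rw [natToInt_add', natToInt_add', h]; ring)⟩
  · exact ⟨z, hz, Or.inr (by rw [natToInt_add', natToInt_add', h]; ring)⟩

lemma accessible_translate {B : Set (Fin p → ℤ)} {x y : Fin p → ℕ} (r : Fin p → ℕ)
    (h : Accessible B x y) : Accessible B (x + r) (y + r) := by
  induction h with
  | refl => exact .refl
  | tail _ h2 ih => exact ih.tail (mstep_translate r h2)

lemma mstep_fiber {B : Set (Fin p → ℤ)} (hB : ∀ z ∈ B, IsMove A z) {t : Fin d → ℤ}
    {x y : Fin p → ℕ} (hx : x ∈ fiberOf A t) (h : MStep B x y) : y ∈ fiberOf A t := by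
  obtain ⟨z, hz, h | h⟩ := h
  · simp only [fiberOf, Set.mem_setOf_eq] at hx ⊢
    rw [h, Matrix.mulVec_add, hx, hB z hz, add_zero]
  · simp only [fiberOf, Set.mem_setOf_eq] at hx ⊢
    rw [h, Matrix.mulVec_sub, hx, hB z hz, sub_zero]

lemma accessible_fiber {B : Set (Fin p → ℤ)} (hB : ∀ z ∈ B, IsMove A z) {t : Fin d → ℤ}
    {x y : Fin p → ℕ} (hx : x ∈ fiberOf A t) (h : Accessible B x y) : y ∈ fiberOf A t := by
  induction h with
  | refl => exact hx
  | tail _ h2 ih => exact mstep_fiber hB ih h2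

lemma eq_of_le_of_sum_le {f g : Fin p → ℕ} (hle : ∀ i, f i ≤ g i)
    (hs : ∑ i, g i ≤ ∑ i, f i) : f = g := by
  funext i
  by_contra hne
  have hlt : f i < g i := lt_of_le_of_ne (hle i) hne
  have := Finset.sum_lt_sum (fun j _ => hle j) ⟨i, Finset.mem_univ i, hlt⟩
  omega

lemma negOf_le_of_step_plus {x y : Fin p → ℕ} {z : Fin p → ℤ}
    (h : natToInt y = natToInt x + z) : ∀ i, negOf z i ≤ x i := by
  intro i; have := congrFun h i
  simp only [natToInt, negOf, Pi.add_apply] at this ⊢; omega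

lemma posOf_le_of_step_minus {x y : Fin p → ℕ} {z : Fin p → ℤ}
    (h : natToInt y = natToInt x - z) : ∀ i, posOf z i ≤ x i := by
  intro i; have := congrFun h i
  simp only [natToInt, posOf, Pi.sub_apply] at this ⊢; omega

lemma decomp_plus {x y : Fin p → ℕ} {z : Fin p → ℤ} (h : natToInt y = natToInt x + z) :
    negOf z + (x - negOf z) = x ∧ posOf z + (x - negOf z) = y := by
  constructor <;> funext i <;>
  · have := congrFun h i
    simp only [natToInt, negOf, posOf, Pi.add_apply, Pi.sub_apply] at this ⊢
    omega

lemma decomp_minus {x y : Fin p → ℕ} {z : Fin p → ℤ} (h : natToInt y = natToInt x - z) :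
    posOf z + (x - posOf z) = x ∧ negOf z + (x - posOf z) = y := by
  constructor <;> funext i <;>
  · have := congrFun h i
    simp only [natToInt, negOf, posOf, Pi.add_apply, Pi.sub_apply] at this ⊢
    omega

lemma mstep_of_mem {B : Set (Fin p → ℤ)} {z : Fin p → ℤ} (hz : z ∈ B) :
    MStep B (negOf z) (posOf z) :=
  ⟨z, hz, Or.inl (by rw [natToInt_negOf]; ring)⟩

lemma mstep_pair {B : Set (Fin p → ℤ)} {z : Fin p → ℤ} {α β : Fin p → ℕ} (hz : z ∈ B)
    (hpn : (posOf z = β ∧ negOf z = α) ∨ (posOf z = α ∧ negOf z = β)) : MStep B α β := by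
  rcases hpn with ⟨h1, h2⟩ | ⟨h1, h2⟩
  · have := mstep_of_mem hz; rwa [h1, h2] at this
  · have := mstep_symm (mstep_of_mem hz); rwa [h1, h2] at this

section Hom2

variable {w : Fin d → ℚ} (hw : ∀ i : Fin p, ∑ j, w j * (A j i : ℚ) = 1)

include hw

omit hw in
lemma posOf_mem_fiber {z : Fin p → ℤ} :
    posOf z ∈ fiberOf A (A.mulVec (natToInt (posOf z))) := rfl

omit hw in
lemma negOf_mem_fiber {z : Fin p → ℤ} (hz : IsMove A z) :
    negOf z ∈ fiberOf A (A.mulVec (natToInt (posOf z))) := by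
  simp only [fiberOf, Set.mem_setOf_eq]
  rw [natToInt_negOf, Matrix.mulVec_sub, hz, sub_zero]

lemma sampleSize_posOf {z : Fin p → ℤ} :
    sampleSize A (A.mulVec (natToInt (posOf z))) = degOf z :=
  sampleSize_eq hw (posOf_mem_fiber (A := A) (z := z))

/-- Analysis of one step inside a fiber. -/
lemma mstep_cases {B : Set (Fin p → ℤ)} (hB : ∀ z ∈ B, IsMove A z) {t : Fin d → ℤ}
    {x y : Fin p → ℕ} (hx : x ∈ fiberOf A t) (h : MStep B x y) :
    MStep (Bmoves A (sampleSize A t - 1)) x y ∨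
      ∃ z ∈ B, degOf z = sampleSize A t ∧
        ((x = negOf z ∧ y = posOf z) ∨ (x = posOf z ∧ y = negOf z)) := by
  obtain ⟨z, hz, hc⟩ := h
  have hmv := hB z hz
  have hsx : sampleSize A t = ∑ i, x i := sampleSize_eq hw hx
  have hdeg : degOf z ≤ sampleSize A t := by
    rcases hc with hc | hc
    · have hle := negOf_le_of_step_plus hc
      have : ∑ i, negOf z i ≤ ∑ i, x i := Finset.sum_le_sum fun i _ => hle i
      rw [deg_neg_eq hw hmv] at this; omega
    · have hle := posOf_le_of_step_minus hc
      have : ∑ i, posOf z i ≤ ∑ i, x i := Finset.sum_le_sum fun i _ => hle i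
      simpa [degOf, hsx] using this
  rcases Nat.lt_or_ge (degOf z) (sampleSize A t) with hlt | hge
  · exact Or.inl ⟨z, ⟨hmv, by omega⟩, hc⟩
  · have hdeq : degOf z = sampleSize A t := le_antisymm hdeg hge
    refine Or.inr ⟨z, hz, hdeq, ?_⟩
    rcases hc with hc | hc
    · have hle := negOf_le_of_step_plus hc
      have hxz : x = negOf z := by
        refine (eq_of_le_of_sum_le hle ?_).symm
        rw [deg_neg_eq hw hmv, hdeq, hsx]
      refine Or.inl ⟨hxz, natToInt_injective ?_⟩
      rw [hc, hxz, natToInt_negOf]; ring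
    · have hle := posOf_le_of_step_minus hc
      have hxz : x = posOf z := by
        refine (eq_of_le_of_sum_le hle ?_).symm
        rw [show ∑ i, posOf z i = degOf z from rfl, hdeq, hsx]
      refine Or.inr ⟨hxz, natToInt_injective ?_⟩
      rw [hc, hxz, natToInt_negOf]

/-- In a fiber of sample size smaller than `degOf z₀`, the move `z₀` is never used. -/
lemma accessible_avoid {B : Set (Fin p → ℤ)} (hB : ∀ z ∈ B, IsMove A z) {t : Fin d → ℤ}
    {x y : Fin p → ℕ} {z0 : Fin p → ℤ} (hx : x ∈ fiberOf A t)
    (hlt : sampleSize A t < degOf z0) (h : Accessible B x y) :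
    Accessible (B \ {z0}) x y := by
  induction h with
  | refl => exact .refl
  | @tail b c h1 h2 ih =>
    have hb : b ∈ fiberOf A t := accessible_fiber hB hx h1
    obtain ⟨z, hz, hc⟩ := h2
    have hmv := hB z hz
    have hsx : sampleSize A t = ∑ i, b i := sampleSize_eq hw hb
    have hdeg : degOf z ≤ sampleSize A t := by
      rcases hc with hc | hc
      · have hle := negOf_le_of_step_plus hc
        have : ∑ i, negOf z i ≤ ∑ i, b i := Finset.sum_le_sum fun i _ => hle i
        rw [deg_neg_eq hw hmv] at this; omega
      · have hle := posOf_le_of_step_minus hc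
        have : ∑ i, posOf z i ≤ ∑ i, b i := Finset.sum_le_sum fun i _ => hle i
        simpa [degOf, hsx] using this
    refine ih.tail ⟨z, ⟨hz, ?_⟩, hc⟩
    simp only [Set.mem_singleton_iff]
    rintro rfl; omega

end Hom2

/-- Replace every small step by `B'`-accessibility of the endpoints of its move. -/
lemma accessible_replace_small {B' : Set (Fin p → ℤ)} {m : ℕ}
    (hrep : ∀ z', IsMove A z' → degOf z' ≤ m → Accessible B' (negOf z') (posOf z'))
    {x y : Fin p → ℕ} (h : Accessible (Bmoves A m) x y) : Accessible B' x y := by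
  induction h with
  | refl => exact .refl
  | @tail b c h1 h2 ih =>
    obtain ⟨z, ⟨hmv, hdeg⟩, hc | hc⟩ := h2
    · obtain ⟨h1', h2'⟩ := decomp_plus hc
      have := accessible_translate (b - negOf z) (hrep z hmv hdeg)
      rw [h1', h2'] at this
      exact ih.trans this
    · obtain ⟨h1', h2'⟩ := decomp_minus hc
      have := accessible_translate (b - posOf z) (accessible_symm (hrep z hmv hdeg))
      rw [h1', h2'] at this
      exact ih.trans this

/-- The replacement criterion: a set of moves `C'` that can emulate each move of a
Markov basis `C` is itself a Markov basis. -/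
lemma markov_of_replace {C C' : Set (Fin p → ℤ)} (hC : IsMarkovBasis A C)
    (hfin : C'.Finite) (hmv : ∀ z ∈ C', IsMove A z)
    (hrep : ∀ z ∈ C, z ∉ C' → Accessible C' (negOf z) (posOf z)) :
    IsMarkovBasis A C' := by
  refine ⟨hfin, hmv, fun t x hx y hy => ?_⟩
  have h := hC.2.2 t x hx y hy
  clear hx hy
  induction h with
  | refl => exact .refl
  | @tail b c h1 h2 ih =>
    obtain ⟨z, hz, hc⟩ := h2
    by_cases hzc : z ∈ C'
    · exact ih.tail ⟨z, hzc, hc⟩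
    rcases hc with hc | hc
    · obtain ⟨h1', h2'⟩ := decomp_plus hc
      have := accessible_translate (b - negOf z) (hrep z hz hzc)
      rw [h1', h2'] at this
      exact ih.trans this
    · obtain ⟨h1', h2'⟩ := decomp_minus hc
      have := accessible_translate (b - posOf z) (accessible_symm (hrep z hz hzc))
      rw [h1', h2'] at this
      exact ih.trans this


/-! ### minimal Markov bases: basic consequences -/

lemma zero_not_mem_minimal {B : Set (Fin p → ℤ)} (hB : IsMinimalMarkovBasis A B) :
    (0 : Fin p → ℤ) ∉ B := by
  intro h0
  refine hB.2 (B \ {0}) (Set.sdiff_singleton_ssubset.mpr h0) ?_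
  refine markov_of_replace hB.1 (hB.1.1.subset Set.diff_subset)
    (fun z hz => hB.1.2.1 z hz.1) ?_
  intro z hz hnot
  have hz0 : z = 0 := by
    by_contra hne
    exact hnot ⟨hz, by simpa using hne⟩
  subst hz0
  have : negOf (0 : Fin p → ℤ) = posOf 0 := by funext i; simp [negOf, posOf]
  rw [this]
  exact .refl

lemma neg_not_mem_minimal {B : Set (Fin p → ℤ)} (hB : IsMinimalMarkovBasis A B)
    {z : Fin p → ℤ} (hz : z ∈ B) (hneg : -z ∈ B) : False := by
  have hz0 : z ≠ 0 := fun h => zero_not_mem_minimal hB (h ▸ hz)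
  refine hB.2 (B \ {z}) (Set.sdiff_singleton_ssubset.mpr hz) ?_
  refine markov_of_replace hB.1 (hB.1.1.subset Set.diff_subset)
    (fun z' hz' => hB.1.2.1 z' hz'.1) ?_
  intro z' hz' hnot
  have hz'' : z' = z := by
    by_contra hne
    exact hnot ⟨hz', by simpa using hne⟩
  subst hz''
  have hnz : -z' ∈ B \ {z'} := by
    refine ⟨hneg, ?_⟩
    simp only [Set.mem_singleton_iff]
    intro h
    apply hz0
    funext i
    have := congrFun h i
    simp only [Pi.neg_apply, Pi.zero_apply] at this ⊢
    omega
  exact Relation.ReflTransGen.single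
    ⟨-z', hnz, Or.inr (by rw [natToInt_negOf]; ring)⟩

section Hom3

variable {w : Fin d → ℚ} (hw : ∀ i : Fin p, ∑ j, w j * (A j i : ℚ) = 1)

include hw

lemma one_le_degOf {z : Fin p → ℤ} (hmv : IsMove A z) (hz0 : z ≠ 0) : 1 ≤ degOf z := by
  by_contra h
  have hdeg : degOf z = 0 := by omega
  have hneg : ∑ i, negOf z i = 0 := by rw [deg_neg_eq hw hmv, hdeg]
  have hpos : ∑ i, posOf z i = 0 := hdeg
  apply hz0
  funext i
  have h1 : posOf z i = 0 :=
    (Finset.sum_eq_zero_iff.mp hpos) i (Finset.mem_univ i)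
  have h2 : negOf z i = 0 :=
    (Finset.sum_eq_zero_iff.mp hneg) i (Finset.mem_univ i)
  simp only [posOf, negOf, Pi.zero_apply] at h1 h2 ⊢
  omega

/-- Any move of degree smaller than `degOf z0` has its endpoints connected avoiding `z0`. -/
lemma small_move_accessible {B : Set (Fin p → ℤ)} (hB : IsMarkovBasis A B)
    {z0 w' : Fin p → ℤ} (hwmv : IsMove A w') (hlt : degOf w' < degOf z0) :
    Accessible (B \ {z0}) (negOf w') (posOf w') := by
  have hacc := hB.2.2 (A.mulVec (natToInt (posOf w'))) (negOf w')
    (negOf_mem_fiber hwmv) (posOf w') posOf_mem_fiber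
  exact accessible_avoid hw hB.2.1 (negOf_mem_fiber hwmv)
    (by rw [sampleSize_posOf hw]; exact hlt) hacc

/-- A move of a minimal Markov basis never has its endpoints connected by smaller moves. -/
lemma not_small_accessible {B : Set (Fin p → ℤ)} (hB : IsMinimalMarkovBasis A B)
    {z : Fin p → ℤ} (hz : z ∈ B) (hz0 : z ≠ 0)
    (h : Accessible (Bmoves A (degOf z - 1)) (negOf z) (posOf z)) : False := by
  have hmv := hB.1.2.1 z hz
  have h1 := one_le_degOf hw hmv hz0
  refine hB.2 (B \ {z}) (Set.sdiff_singleton_ssubset.mpr hz) ?_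
  refine markov_of_replace hB.1 (hB.1.1.subset Set.diff_subset)
    (fun z' hz' => hB.1.2.1 z' hz'.1) ?_
  intro z' hz' hnot
  have hz'' : z' = z := by
    by_contra hne
    exact hnot ⟨hz', by simpa using hne⟩
  subst hz''
  refine accessible_replace_small ?_ h
  intro w' hwmv hwdeg
  exact small_move_accessible hw hB.1 hwmv (by omega)

end Hom3

/-- Extract a direct step on a two-element fiber. -/
lemma pair_step {B : Set (Fin p → ℤ)} (hmvB : ∀ z ∈ B, IsMove A z) {t : Fin d → ℤ}
    {a b : Fin p → ℕ} (ha : a ∈ fiberOf A t) (hF : ∀ v ∈ fiberOf A t, v = a ∨ v = b)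
    (hab : a ≠ b) (hacc : Accessible B a b) : MStep B a b := by
  have key : ∀ x, Accessible B x b → x ∈ fiberOf A t → x = a → MStep B a b := by
    intro x hx
    induction hx using Relation.ReflTransGen.head_induction_on with
    | refl => intro _ hba; exact absurd hba.symm hab
    | @head x' c hstep htail ih =>
      intro hxf hxa
      subst hxa
      have hc : c ∈ fiberOf A t := mstep_fiber hmvB hxf hstep
      rcases hF c hc with rfl | rfl
      · exact ih hc rfl
      · exact hstep
  exact key a hacc ha rfl

lemma move_eq_of_step {z w : Fin p → ℤ}
    (h : natToInt (negOf z) = natToInt (posOf z) + w ∨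
         natToInt (negOf z) = natToInt (posOf z) - w) :
    w = -z ∨ w = z := by
  rcases h with h | h
  · left; funext i
    have := congrFun h i
    simp only [natToInt, posOf, negOf, Pi.add_apply, Pi.neg_apply] at this ⊢
    omega
  · right; funext i
    have := congrFun h i
    simp only [natToInt, posOf, negOf, Pi.sub_apply] at this ⊢
    omega

section HomMpr

variable {w : Fin d → ℚ} (hw : ∀ i : Fin p, ∑ j, w j * (A j i : ℚ) = 1)

include hw

/-- One half of the uniqueness direction. -/
lemma mem_or_neg_mem (hRHS : ∀ t : Fin d → ℤ, (fiberOf A t).Nonempty →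
      ((∀ x ∈ fiberOf A t, ∀ y ∈ fiberOf A t,
          Accessible (Bmoves A (sampleSize A t - 1)) x y) ∨
        (fiberOf A t).encard = 2))
    {B₁ B₂ : Set (Fin p → ℤ)} (hB₁ : IsMinimalMarkovBasis A B₁)
    (hB₂ : IsMinimalMarkovBasis A B₂) {z : Fin p → ℤ} (hz : z ∈ B₁) :
    z ∈ B₂ ∨ -z ∈ B₂ := by
  have hz0 : z ≠ 0 := fun h => zero_not_mem_minimal hB₁ (h ▸ hz)
  have hmv : IsMove A z := hB₁.1.2.1 z hz
  set t := A.mulVec (natToInt (posOf z)) with ht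
  have hpmem : posOf z ∈ fiberOf A t := posOf_mem_fiber
  have hnmem : negOf z ∈ fiberOf A t := negOf_mem_fiber hmv
  have hss : sampleSize A t = degOf z := sampleSize_posOf hw
  have hne : posOf z ≠ negOf z := fun h => hz0 (eq_zero_of_posOf_negOf z h)
  rcases hRHS t ⟨posOf z, hpmem⟩ with hsingle | htwo
  · exfalso
    refine not_small_accessible hw hB₁ hz hz0 ?_
    have := hsingle (negOf z) hnmem (posOf z) hpmem
    rwa [hss] at this
  · -- the fiber is exactly the pair
    have hpair : ({posOf z, negOf z} : Set (Fin p → ℕ)) = fiberOf A t := by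
      refine Set.Finite.eq_of_subset_of_encard_le (Set.toFinite _) ?_ ?_
      · rintro v (rfl | rfl)
        exacts [hpmem, hnmem]
      · rw [htwo, Set.encard_pair hne]
    have hacc : Accessible B₂ (posOf z) (negOf z) :=
      hB₂.1.2.2 t (posOf z) hpmem (negOf z) hnmem
    have hstep : MStep B₂ (posOf z) (negOf z) := by
      refine pair_step hB₂.1.2.1 hpmem (fun v hv => ?_) hne hacc
      have : v ∈ ({posOf z, negOf z} : Set (Fin p → ℕ)) := hpair ▸ hv
      simpa using this
    obtain ⟨w', hw', hc⟩ := hstep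
    rcases move_eq_of_step hc with rfl | rfl
    · right; simpa using hw'
    · left; exact hw'

end HomMpr


/-! ### existence of a minimal Markov basis -/

def Conformal (g z : Fin p → ℤ) : Prop :=
  (∀ i, posOf g i ≤ posOf z i) ∧ ∀ i, negOf g i ≤ negOf z i

lemma conformal_refl (z : Fin p → ℤ) : Conformal z z :=
  ⟨fun _ => le_rfl, fun _ => le_rfl⟩

def Graver (A : Matrix (Fin d) (Fin p) ℤ) : Set (Fin p → ℤ) :=
  {z | IsMove A z ∧ z ≠ 0 ∧ ∀ g, IsMove A g → g ≠ 0 → Conformal g z → g = z}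

lemma graver_finite : (Graver A).Finite := by
  have hpwo : Set.PartiallyWellOrderedOn (Graver A) (fun g z => Conformal g z) := by
    rw [Set.partiallyWellOrderedOn_iff_exists_lt]
    intro f hf
    have h1 : Set.IsPWO (Set.univ : Set ((Fin p → ℕ) × (Fin p → ℕ))) := by
      have hpi : ∀ s : Set (Fin p → ℕ), s.IsPWO := fun s =>
        Set.isPWO_of_wellQuasiOrderedLE s
      have := (hpi Set.univ).prod (hpi Set.univ)
      simpa [Set.univ_prod_univ] using this
    obtain ⟨m, n, hmn, hle⟩ := Set.partiallyWellOrderedOn_iff_exists_lt.mp h1 (fun k => (posOf (f k), negOf (f k)))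
      (fun _ => Set.mem_univ _)
    exact ⟨m, n, hmn, fun i => hle.1 i, fun i => hle.2 i⟩
  have hanti : IsAntichain (fun g z => Conformal g z) (Graver A) := by
    intro a ha b hb hne hc
    exact hne (hb.2.2 a ha.1 ha.2.1 hc)
  exact hanti.finite_of_partiallyWellOrderedOn hpwo

lemma exists_graver_le {z : Fin p → ℤ} (hmv : IsMove A z) (hz0 : z ≠ 0) :
    ∃ g ∈ Graver A, Conformal g z := by
  classical
  set S : Set (Fin p → ℤ) := {g | IsMove A g ∧ g ≠ 0 ∧ Conformal g z} with hS
  have hzS : z ∈ S := ⟨hmv, hz0, conformal_refl z⟩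
  set μ : (Fin p → ℤ) → ℕ := fun g => (∑ i, posOf g i) + ∑ i, negOf g i with hμ
  have hne : (μ '' S).Nonempty := ⟨μ z, z, hzS, rfl⟩
  obtain ⟨g, hgS, hgmin⟩ : ∃ g ∈ S, ∀ g' ∈ S, μ g ≤ μ g' := by
    obtain ⟨g, hgS, hg⟩ := Nat.sInf_mem hne
    exact ⟨g, hgS, fun g' hg' => hg ▸ Nat.sInf_le ⟨g', hg', rfl⟩⟩
  refine ⟨g, ⟨hgS.1, hgS.2.1, ?_⟩, hgS.2.2⟩
  intro g' hmv' hne' hc'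
  have hc'z : Conformal g' z :=
    ⟨fun i => le_trans (hc'.1 i) (hgS.2.2.1 i), fun i => le_trans (hc'.2 i) (hgS.2.2.2 i)⟩
  have hg'S : g' ∈ S := ⟨hmv', hne', hc'z⟩
  have hμle : μ g ≤ μ g' := hgmin g' hg'S
  have h1 : ∑ i, posOf g' i ≤ ∑ i, posOf g i := Finset.sum_le_sum fun i _ => hc'.1 i
  have h2 : ∑ i, negOf g' i ≤ ∑ i, negOf g i := Finset.sum_le_sum fun i _ => hc'.2 i
  have e1 : posOf g' = posOf g := eq_of_le_of_sum_le hc'.1 (by simp only [hμ] at hμle; omega)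
  have e2 : negOf g' = negOf g := eq_of_le_of_sum_le hc'.2 (by simp only [hμ] at hμle; omega)
  funext i
  have q1 := congrFun e1 i
  have q2 := congrFun e2 i
  simp only [posOf, negOf] at q1 q2
  omega

section HomEx

variable {w : Fin d → ℚ} (hw : ∀ i : Fin p, ∑ j, w j * (A j i : ℚ) = 1)

include hw

lemma graver_markov : IsMarkovBasis A (Graver A) := by
  refine ⟨graver_finite, fun z hz => hz.1, ?_⟩
  suffices key : ∀ n (x y : Fin p → ℕ) (t : Fin d → ℤ), x ∈ fiberOf A t → y ∈ fiberOf A t →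
      degOf (natToInt y - natToInt x) ≤ n → Accessible (Graver A) x y by
    intro t x hx y hy
    exact key _ x y t hx hy le_rfl
  intro n
  induction n with
  | zero =>
    intro x y t hx hy hdeg
    by_cases hxy : x = y
    · subst hxy; exact .refl
    · exfalso
      have hmvz : IsMove A (natToInt y - natToInt x) := by
        unfold IsMove
        rw [Matrix.mulVec_sub, hx, hy, sub_self]
      have hz0 : natToInt y - natToInt x ≠ 0 := by
        intro h
        refine hxy (natToInt_injective ?_).symm
        funext i; have := congrFun h i
        simp only [Pi.sub_apply, Pi.zero_apply] at this
        simp only [natToInt] at this ⊢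
        omega
      have := one_le_degOf hw hmvz hz0
      omega
  | succ n ih =>
    intro x y t hx hy hdeg
    by_cases hxy : x = y
    · subst hxy; exact .refl
    have hmvz : IsMove A (natToInt y - natToInt x) := by
      unfold IsMove
      rw [Matrix.mulVec_sub, hx, hy, sub_self]
    have hz0 : natToInt y - natToInt x ≠ 0 := by
      intro h
      refine hxy (natToInt_injective ?_).symm
      funext i; have := congrFun h i
      simp only [Pi.sub_apply, Pi.zero_apply] at this
      simp only [natToInt] at this ⊢
      omega
    obtain ⟨g, hg, hc⟩ := exists_graver_le hmvz hz0
    have hgneg : ∀ i, negOf g i ≤ x i := by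
      intro i
      refine le_trans (hc.2 i) ?_
      rw [negOf_diff]
      omega
    set x' : Fin p → ℕ := fun i => x i - negOf g i + posOf g i with hx'def
    have hstep : MStep (Graver A) x x' := by
      refine ⟨g, hg, Or.inl ?_⟩
      funext i
      have hpn := congrFun (posOf_sub_negOf g) i
      have := hgneg i
      simp only [natToInt, Pi.add_apply, Pi.sub_apply, hx'def] at hpn ⊢
      push_cast
      omega
    have hx'f : x' ∈ fiberOf A t := mstep_fiber (fun z hz => hz.1) hx hstep
    have hkey : ∀ i, posOf (natToInt y - natToInt x') i + posOf g i
        = posOf (natToInt y - natToInt x) i := by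
      intro i
      have h1 := hc.1 i
      have h2 := hc.2 i
      have h3 := hgneg i
      simp only [posOf, negOf, natToInt, Pi.sub_apply, hx'def] at h1 h2 ⊢
      omega
    have hdeg' : degOf (natToInt y - natToInt x') ≤ n := by
      have hsum : degOf (natToInt y - natToInt x') + degOf g
          = degOf (natToInt y - natToInt x) := by
        unfold degOf
        rw [← Finset.sum_add_distrib]
        exact Finset.sum_congr rfl fun i _ => hkey i
      have hg1 : 1 ≤ degOf g := one_le_degOf hw hg.1 hg.2.1
      omega
    exact (Relation.ReflTransGen.single hstep).trans (ih x' y t hx'f hy hdeg')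

lemma exists_minimal_markov : ∃ B : Set (Fin p → ℤ), IsMinimalMarkovBasis A B := by
  classical
  have hmB := graver_markov hw
  set SS : Set ℕ := {n | ∃ B : Set (Fin p → ℤ), IsMarkovBasis A B ∧ B.ncard = n} with hSS
  have hne : SS.Nonempty := ⟨_, _, hmB, rfl⟩
  obtain ⟨B, hBmar, hBcard⟩ := Nat.sInf_mem hne
  refine ⟨B, hBmar, ?_⟩
  intro B' hB' hmar'
  have hlt : B'.ncard < B.ncard := Set.ncard_lt_ncard hB' hBmar.1
  have hle : sInf SS ≤ B'.ncard := Nat.sInf_le ⟨B', hmar', rfl⟩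
  omega

end HomEx

lemma markov_superset {B B' : Set (Fin p → ℤ)} (hB : IsMarkovBasis A B) (hsub : B ⊆ B')
    (hfin : B'.Finite) (hmv : ∀ z ∈ B', IsMove A z) : IsMarkovBasis A B' :=
  ⟨hfin, hmv, fun t x hx y hy => accessible_mono hsub (hB.2.2 t x hx y hy)⟩

lemma minimal_of_remove {B : Set (Fin p → ℤ)} (hB : IsMarkovBasis A B)
    (h : ∀ w' ∈ B, ¬ IsMarkovBasis A (B \ {w'})) : IsMinimalMarkovBasis A B := by
  refine ⟨hB, fun B' hss hmar' => ?_⟩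
  obtain ⟨w', hwB, hwB'⟩ := Set.exists_of_ssubset hss
  refine h w' hwB (markov_superset hmar' ?_ (hB.1.subset Set.diff_subset)
    (fun v hv => hB.2.1 v hv.1))
  intro v hv
  refine ⟨hss.1 hv, fun he => ?_⟩
  rw [Set.mem_singleton_iff] at he
  subst he
  exact hwB' hv


/-! ### decomposition of paths inside a fiber -/

lemma rtg_pair {γ : Type*} {T : γ → γ → Prop} (hrefl : ∀ a, T a a)
    (htrans : ∀ {a b c : γ}, T a b → T b c → T a c) {b c x y : γ}
    (h : Relation.ReflTransGen
      (fun u v => T u v ∨ (u = b ∧ v = c) ∨ (u = c ∧ v = b)) x y) :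
    T x y ∨ T x b ∨ T x c := by
  induction h with
  | refl => exact Or.inl (hrefl x)
  | tail h1 h2 ih =>
    rcases h2 with h2 | ⟨rfl, rfl⟩ | ⟨rfl, rfl⟩
    · rcases ih with ih | ih | ih
      · exact Or.inl (htrans ih h2)
      · exact Or.inr (Or.inl ih)
      · exact Or.inr (Or.inr ih)
    · rcases ih with ih | ih | ih
      · exact Or.inr (Or.inl ih)
      · exact Or.inr (Or.inl ih)
      · exact Or.inr (Or.inr ih)
    · rcases ih with ih | ih | ih
      · exact Or.inr (Or.inr ih)
      · exact Or.inr (Or.inl ih)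
      · exact Or.inr (Or.inr ih)

section HomC

variable {w : Fin d → ℚ} (hw : ∀ i : Fin p, ∑ j, w j * (A j i : ℚ) = 1)

include hw

lemma sampleSize_pos_of_ne {t : Fin d → ℤ} {a b : Fin p → ℕ} (ha : a ∈ fiberOf A t)
    (hb : b ∈ fiberOf A t) (hab : a ≠ b) : 1 ≤ sampleSize A t := by
  by_contra h
  have h0 : sampleSize A t = 0 := by omega
  apply hab
  have ha0 : ∑ i, a i = 0 := by rw [← sampleSize_eq hw ha, h0]
  have hb0 : ∑ i, b i = 0 := by rw [← sampleSize_eq hw hb, h0]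
  funext i
  have := (Finset.sum_eq_zero_iff.mp ha0) i (Finset.mem_univ i)
  have := (Finset.sum_eq_zero_iff.mp hb0) i (Finset.mem_univ i)
  omega

/-- Full analysis of a step inside a fiber. -/
lemma mstep_analysis {B : Set (Fin p → ℤ)} (hB : ∀ z ∈ B, IsMove A z) {t : Fin d → ℤ}
    {x y : Fin p → ℕ} (hx : x ∈ fiberOf A t) (h : MStep B x y) :
    ∃ z ∈ B, (natToInt y = natToInt x + z ∨ natToInt y = natToInt x - z) ∧
      (degOf z < sampleSize A t ∨
        (degOf z = sampleSize A t ∧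
          ((x = negOf z ∧ y = posOf z) ∨ (x = posOf z ∧ y = negOf z)))) := by
  obtain ⟨z, hz, hc⟩ := h
  have hmv := hB z hz
  have hsx : sampleSize A t = ∑ i, x i := sampleSize_eq hw hx
  have hdeg : degOf z ≤ sampleSize A t := by
    rcases hc with hc | hc
    · have hle := negOf_le_of_step_plus hc
      have : ∑ i, negOf z i ≤ ∑ i, x i := Finset.sum_le_sum fun i _ => hle i
      rw [deg_neg_eq hw hmv] at this; omega
    · have hle := posOf_le_of_step_minus hc
      have : ∑ i, posOf z i ≤ ∑ i, x i := Finset.sum_le_sum fun i _ => hle i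
      simpa [degOf, hsx] using this
  refine ⟨z, hz, hc, ?_⟩
  rcases Nat.lt_or_ge (degOf z) (sampleSize A t) with hlt | hge
  · exact Or.inl hlt
  · have hdeq : degOf z = sampleSize A t := le_antisymm hdeg hge
    refine Or.inr ⟨hdeq, ?_⟩
    rcases hc with hc | hc
    · have hle := negOf_le_of_step_plus hc
      have hxz : x = negOf z := by
        refine (eq_of_le_of_sum_le hle ?_).symm
        rw [deg_neg_eq hw hmv, hdeq, hsx]
      refine Or.inl ⟨hxz, natToInt_injective ?_⟩
      rw [hc, hxz, natToInt_negOf]; ring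
    · have hle := posOf_le_of_step_minus hc
      have hxz : x = posOf z := by
        refine (eq_of_le_of_sum_le hle ?_).symm
        rw [show ∑ i, posOf z i = degOf z from rfl, hdeq, hsx]
      refine Or.inr ⟨hxz, natToInt_injective ?_⟩
      rw [hc, hxz, natToInt_negOf]

/-- Decompose a path using `insert mz C`, with `mz` of full degree, into `C`-accessibility
and direct swaps between the endpoints of `mz`. -/
lemma accessible_decomp {C : Set (Fin p → ℤ)} (hmvC : ∀ z ∈ C, IsMove A z)
    {mz : Fin p → ℤ} (hmmv : IsMove A mz) {t : Fin d → ℤ}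
    (hdeg : degOf mz = sampleSize A t) {x y : Fin p → ℕ} (hx : x ∈ fiberOf A t)
    (h : Accessible (insert mz C) x y) :
    Relation.ReflTransGen (fun u v => Accessible C u v ∨
      (u = negOf mz ∧ v = posOf mz) ∨ (u = posOf mz ∧ v = negOf mz)) x y := by
  have hall : ∀ z' ∈ insert mz C, IsMove A z' := by
    rintro z' (rfl | hz'); exacts [hmmv, hmvC z' hz']
  induction h with
  | refl => exact .refl
  | @tail b c h1 h2 ih =>
    have hb : b ∈ fiberOf A t := accessible_fiber hall hx h1
    obtain ⟨z, hz, heq, hcase⟩ := mstep_analysis hw hall hb h2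
    rcases hz with rfl | hzC
    · rcases hcase with hlt | ⟨_, hends⟩
      · omega
      · refine ih.tail (Or.inr ?_)
        rcases hends with ⟨hb', hc'⟩ | ⟨hb', hc'⟩
        · exact Or.inl ⟨hb', hc'⟩
        · exact Or.inr ⟨hb', hc'⟩
    · exact ih.tail (Or.inl (Relation.ReflTransGen.single ⟨z, hzC, heq⟩))

/-- Construct the move between two non-equivalent elements of a fiber. -/
lemma construct_move {t : Fin d → ℤ} {β u'' : Fin p → ℕ} (hβ : β ∈ fiberOf A t)
    (hu : u'' ∈ fiberOf A t)
    (hnacc : ¬ Accessible (Bmoves A (sampleSize A t - 1)) u'' β) :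
    IsMove A (natToInt β - natToInt u'') ∧ posOf (natToInt β - natToInt u'') = β ∧
      negOf (natToInt β - natToInt u'') = u'' ∧
      degOf (natToInt β - natToInt u'') = sampleSize A t := by
  set m := natToInt β - natToInt u'' with hm
  have hβ' : A.mulVec (natToInt β) = t := hβ
  have hu' : A.mulVec (natToInt u'') = t := hu
  have hmv : IsMove A m := by
    unfold IsMove
    rw [hm, Matrix.mulVec_sub, hβ', hu', sub_self]
  have hne : u'' ≠ β := fun h => hnacc (h ▸ Relation.ReflTransGen.refl)
  have hn1 : 1 ≤ sampleSize A t := sampleSize_pos_of_ne hw hu hβ hne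
  have hβs : ∑ i, β i = sampleSize A t := (sampleSize_eq hw hβ).symm
  have hdle : degOf m ≤ sampleSize A t := by
    rw [← hβs]
    refine Finset.sum_le_sum fun i _ => ?_
    rw [hm, posOf_diff]
    omega
  have hdeq : degOf m = sampleSize A t := by
    by_contra h
    have hsmall : degOf m ≤ sampleSize A t - 1 := by omega
    exact hnacc (Relation.ReflTransGen.single
      ⟨m, ⟨hmv, hsmall⟩, Or.inl (by rw [hm]; ring)⟩)
  have hpt : ∀ i, β i - u'' i = β i := by
    have he : (fun i => β i - u'' i) = β := by
      refine eq_of_le_of_sum_le (fun i => Nat.sub_le _ _) ?_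
      have : ∑ i, (β i - u'' i) = degOf m := by
        unfold degOf
        refine (Finset.sum_congr rfl fun i _ => ?_).symm
        rw [hm, posOf_diff]
      rw [this, hdeq, hβs]
    exact fun i => congrFun he i
  refine ⟨hmv, ?_, ?_, hdeq⟩
  · funext i
    rw [hm, posOf_diff]
    exact hpt i
  · funext i
    rw [hm, negOf_diff]
    have := hpt i
    omega

/-- Find a crossing move of `B`: one of full degree whose endpoints are not
`B_{n-1}`-equivalent, with an endpoint equivalent to `u`. -/
lemma exists_crossing {B : Set (Fin p → ℤ)} (hB : IsMarkovBasis A B) {t : Fin d → ℤ}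
    {u y0 : Fin p → ℕ} (hu : u ∈ fiberOf A t) (hy : y0 ∈ fiberOf A t)
    (hnacc : ¬ Accessible (Bmoves A (sampleSize A t - 1)) u y0) :
    ∃ z ∈ B, posOf z ∈ fiberOf A t ∧ negOf z ∈ fiberOf A t ∧
      ¬ Accessible (Bmoves A (sampleSize A t - 1)) (negOf z) (posOf z) ∧
      (Accessible (Bmoves A (sampleSize A t - 1)) (negOf z) u ∨
       Accessible (Bmoves A (sampleSize A t - 1)) (posOf z) u) := by
  have key : ∀ v, Accessible B u v → v ∈ fiberOf A t →
      (Accessible (Bmoves A (sampleSize A t - 1)) v u ∨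
        ∃ z ∈ B, posOf z ∈ fiberOf A t ∧ negOf z ∈ fiberOf A t ∧
          ¬ Accessible (Bmoves A (sampleSize A t - 1)) (negOf z) (posOf z) ∧
          (Accessible (Bmoves A (sampleSize A t - 1)) (negOf z) u ∨
           Accessible (Bmoves A (sampleSize A t - 1)) (posOf z) u)) := by
    intro v hv
    induction hv with
    | refl => intro _; exact Or.inl .refl
    | @tail b c h1 h2 ih =>
      intro hcf
      have hbf : b ∈ fiberOf A t := accessible_fiber hB.2.1 hu h1
      rcases ih hbf with hSbu | hgoal
      swap
      · exact Or.inr hgoal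
      obtain ⟨z, hzB, heq, hcase⟩ := mstep_analysis hw hB.2.1 hbf h2
      rcases hcase with hlt | ⟨hdeq, hends⟩
      · have hstep : MStep (Bmoves A (sampleSize A t - 1)) b c :=
          ⟨z, ⟨hB.2.1 z hzB, by omega⟩, heq⟩
        exact Or.inl ((accessible_symm (Relation.ReflTransGen.single hstep)).trans hSbu)
      · by_cases hS : Accessible (Bmoves A (sampleSize A t - 1)) (negOf z) (posOf z)
        · have hScb : Accessible (Bmoves A (sampleSize A t - 1)) c b := by
            rcases hends with ⟨rfl, rfl⟩ | ⟨rfl, rfl⟩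
            exacts [accessible_symm hS, hS]
          exact Or.inl (hScb.trans hSbu)
        · refine Or.inr ⟨z, hzB, ?_, ?_, hS, ?_⟩
          · rcases hends with ⟨rfl, rfl⟩ | ⟨rfl, rfl⟩; exacts [hcf, hbf]
          · rcases hends with ⟨rfl, rfl⟩ | ⟨rfl, rfl⟩; exacts [hbf, hcf]
          · rcases hends with ⟨hb', _⟩ | ⟨hb', _⟩
            · exact Or.inl (hb' ▸ hSbu)
            · exact Or.inr (hb' ▸ hSbu)
  rcases key y0 (hB.2.2 t u hu y0 hy) hy with hS | hgoal
  · exact absurd (accessible_symm hS) hnacc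
  · exact hgoal

/-- In a fiber with singleton classes, some move of `B` has both endpoints in the fiber. -/
lemma exists_full_move {B : Set (Fin p → ℤ)} (hB : IsMarkovBasis A B) {t : Fin d → ℤ}
    {x y : Fin p → ℕ} (hx : x ∈ fiberOf A t) (hy : y ∈ fiberOf A t) (hxy : x ≠ y)
    (hsing : ∀ u ∈ fiberOf A t, ∀ v ∈ fiberOf A t,
      Accessible (Bmoves A (sampleSize A t - 1)) u v → u = v) :
    ∃ z ∈ B, posOf z ∈ fiberOf A t ∧ negOf z ∈ fiberOf A t ∧ posOf z ≠ negOf z := by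
  have key : ∀ v, Accessible B v y → v ∈ fiberOf A t → v ≠ y →
      ∃ z ∈ B, posOf z ∈ fiberOf A t ∧ negOf z ∈ fiberOf A t ∧ posOf z ≠ negOf z := by
    intro v hv
    induction hv using Relation.ReflTransGen.head_induction_on with
    | refl => intro _ h; exact absurd rfl h
    | @head v' c hstep htail ih =>
      intro hv'f hv'y
      have hcf : c ∈ fiberOf A t := mstep_fiber hB.2.1 hv'f hstep
      by_cases hvc : v' = c
      · by_cases hcy : c = y
        · exact absurd (hvc.trans hcy) hv'y
        · exact ih hcf hcy
      · obtain ⟨z, hzB, heq, hcase⟩ := mstep_analysis hw hB.2.1 hv'f hstep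
        rcases hcase with hlt | ⟨hdeq, hends⟩
        · exfalso
          apply hvc
          refine hsing v' hv'f c hcf (Relation.ReflTransGen.single ?_)
          exact ⟨z, ⟨hB.2.1 z hzB, by omega⟩, heq⟩
        · refine ⟨z, hzB, ?_, ?_, ?_⟩
          · rcases hends with ⟨rfl, rfl⟩ | ⟨rfl, rfl⟩; exacts [hcf, hv'f]
          · rcases hends with ⟨rfl, rfl⟩ | ⟨rfl, rfl⟩; exacts [hv'f, hcf]
          · rcases hends with ⟨hb', hc'⟩ | ⟨hb', hc'⟩
            · rw [← hb', ← hc']; exact fun h => hvc h.symm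
            · rw [← hb', ← hc']; exact hvc
  exact key x (hB.2.2 t x hx y hy) hx hxy

end HomC


section HomMain

variable {w : Fin d → ℚ} (hw : ∀ i : Fin p, ∑ j, w j * (A j i : ℚ) = 1)

include hw

/-- Case A: an endpoint class of a crossing move contains a second element. -/
lemma caseA_contra {B : Set (Fin p → ℤ)} (hB : IsMinimalMarkovBasis A B) {t : Fin d → ℤ}
    {z : Fin p → ℤ} {α β u'' : Fin p → ℕ} (hz : z ∈ B)
    (hpn : (posOf z = β ∧ negOf z = α) ∨ (posOf z = α ∧ negOf z = β))
    (hα : α ∈ fiberOf A t) (hβ : β ∈ fiberOf A t)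
    (hnab : ¬ Accessible (Bmoves A (sampleSize A t - 1)) α β)
    (hu : u'' ∈ fiberOf A t) (hua : Accessible (Bmoves A (sampleSize A t - 1)) u'' α)
    (hune : u'' ≠ α)
    (huniq : ∀ B₁ B₂ : Set (Fin p → ℤ), IsMinimalMarkovBasis A B₁ →
      IsMinimalMarkovBasis A B₂ → EqUpToSign B₁ B₂) : False := by
  have hmvB := hB.1.2.1
  have hmvz := hmvB z hz
  have hαβ : α ≠ β := fun h => hnab (h ▸ Relation.ReflTransGen.refl)
  have hn1 : 1 ≤ sampleSize A t := sampleSize_pos_of_ne hw hα hβ hαβ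
  have hnub : ¬ Accessible (Bmoves A (sampleSize A t - 1)) u'' β :=
    fun h => hnab ((accessible_symm hua).trans h)
  obtain ⟨hmmv, hmp, hmn, hmdeg⟩ := construct_move hw hβ hu hnub
  set m := natToInt β - natToInt u'' with hm
  have hdegz : degOf z = sampleSize A t := by
    rcases hpn with ⟨h1, _⟩ | ⟨h1, _⟩
    · rw [show degOf z = ∑ i, posOf z i from rfl, h1, ← sampleSize_eq hw hβ]
    · rw [show degOf z = ∑ i, posOf z i from rfl, h1, ← sampleSize_eq hw hα]
  have hzm : z ≠ m := by
    intro h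
    rcases hpn with ⟨_, h2⟩ | ⟨h1, _⟩
    · exact hune (show u'' = α by rw [← hmn, ← h, h2])
    · exact hαβ (show α = β by rw [← h1, h, hmp])
  have hnzm : -z ≠ m := by
    intro h
    rcases hpn with ⟨h1, h2⟩ | ⟨h1, h2⟩
    · exact hαβ (show α = β by rw [← h2, ← posOf_neg, h, hmp])
    · exact hune (show u'' = α by rw [← hmn, ← h, negOf_neg, h1])
  set B₂ := insert m (B \ {z}) with hB₂
  have hmvB₂ : ∀ z' ∈ B₂, IsMove A z' := by
    rintro z' (rfl | hz'); exacts [hmmv, hmvB z' hz'.1]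
  have hfinB₂ : B₂.Finite := (hB.1.1.subset Set.diff_subset).insert m
  have hsmall : ∀ w', IsMove A w' → degOf w' ≤ sampleSize A t - 1 →
      Accessible (B \ {z}) (negOf w') (posOf w') := by
    intro w' hw1 hw2
    exact small_move_accessible hw hB.1 hw1 (by omega)
  have hαu : Accessible (B \ {z}) α u'' :=
    accessible_replace_small hsmall (accessible_symm hua)
  have hstepm : MStep B₂ u'' β := ⟨m, Set.mem_insert m _, Or.inl (by rw [hm]; ring)⟩
  have hαβ₂ : Accessible B₂ α β :=
    (accessible_mono (Set.subset_insert m _) hαu).tail hstepm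
  have hzend : Accessible B₂ (negOf z) (posOf z) := by
    rcases hpn with ⟨h1, h2⟩ | ⟨h1, h2⟩
    · rw [h1, h2]; exact hαβ₂
    · rw [h1, h2]; exact accessible_symm hαβ₂
  have hB₂mar : IsMarkovBasis A B₂ := by
    refine markov_of_replace hB.1 hfinB₂ hmvB₂ ?_
    intro z' hz' hnot
    have hz'' : z' = z := by
      by_contra hne'
      exact hnot (Set.mem_insert_of_mem m ⟨hz', by simpa using hne'⟩)
    subst hz''; exact hzend
  have hmB : m ∉ B := by
    intro hmem
    have heq2 : B₂ = B \ {z} := by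
      rw [hB₂]
      exact Set.insert_eq_self.mpr ⟨hmem, by simpa using (Ne.symm hzm)⟩
    exact hB.2 (B \ {z}) (Set.sdiff_singleton_ssubset.mpr hz) (heq2 ▸ hB₂mar)
  have hB₂min : IsMinimalMarkovBasis A B₂ := by
    refine minimal_of_remove hB₂mar ?_
    intro w' hw' hmar'
    rcases hw' with rfl | hw'B
    · have heq2 : B₂ \ {m} = B \ {z} := by
        rw [hB₂, Set.insert_diff_self_of_notMem]
        exact fun hc => hmB hc.1
      exact hB.2 (B \ {z}) (Set.sdiff_singleton_ssubset.mpr hz) (heq2 ▸ hmar')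
    · have hww : w' ≠ z := fun h => hw'B.2 (by simp [h])
      have hzmem : z ∈ B \ {w'} := ⟨hz, by simpa using (Ne.symm hww)⟩
      have hsub2 : (B₂ \ {w'}) \ {m} ⊆ B \ {w'} := by
        intro v hv
        obtain ⟨⟨hv1, hv2⟩, hv3⟩ := hv
        rcases hv1 with rfl | hv1
        · exact absurd rfl hv3
        · exact ⟨hv1.1, hv2⟩
      have hsmall' : ∀ w'', IsMove A w'' → degOf w'' ≤ sampleSize A t - 1 →
          Accessible (B \ {w'}) (negOf w'') (posOf w'') := by
        intro w'' h1 h2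
        refine accessible_mono hsub2 ?_
        exact small_move_accessible hw hmar' h1 (by omega)
      have huβ : Accessible (B \ {w'}) u'' β := by
        have h1 : Accessible (B \ {w'}) u'' α := accessible_replace_small hsmall' hua
        exact h1.tail (mstep_pair hzmem hpn)
      have hfin3 : (B \ {w'}).Finite := hB.1.1.subset Set.diff_subset
      have hmar3 : IsMarkovBasis A (B \ {w'}) := by
        refine markov_of_replace hmar' hfin3 (fun v hv => hmvB v hv.1) ?_
        intro z' hz' hnot
        have hz'm : z' = m := by
          rcases hz'.1 with rfl | hz''
          · rfl
          · exact absurd ⟨hz''.1, hz'.2⟩ hnot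
        subst hz'm
        rw [hmn, hmp]
        exact huβ
      exact hB.2 (B \ {w'}) (Set.sdiff_singleton_ssubset.mpr hw'B.1) hmar3
  have hEq := huniq B B₂ hB hB₂min
  rcases hEq.1 z hz with hc | hc
  · rcases hc with hc | hc
    · exact hzm hc
    · exact hc.2 rfl
  · rcases hc with hc | hc
    · exact hnzm hc
    · exact neg_not_mem_minimal hB hz hc.1

/-- Case B: all classes are singletons and there is a third fiber element. -/
lemma caseB_contra {B : Set (Fin p → ℤ)} (hB : IsMinimalMarkovBasis A B) {t : Fin d → ℤ}
    {z : Fin p → ℤ} {α β c' : Fin p → ℕ} (hz : z ∈ B)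
    (hpn : (posOf z = β ∧ negOf z = α) ∨ (posOf z = α ∧ negOf z = β))
    (hα : α ∈ fiberOf A t) (hβ : β ∈ fiberOf A t) (hαβ : α ≠ β)
    (hsing : ∀ u ∈ fiberOf A t, ∀ v ∈ fiberOf A t,
      Accessible (Bmoves A (sampleSize A t - 1)) u v → u = v)
    (hc' : c' ∈ fiberOf A t) (hcα : c' ≠ α) (hcβ : c' ≠ β)
    (hRca : Accessible (B \ {z}) c' α)
    (huniq : ∀ B₁ B₂ : Set (Fin p → ℤ), IsMinimalMarkovBasis A B₁ →
      IsMinimalMarkovBasis A B₂ → EqUpToSign B₁ B₂) : False := by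
  have hmvB := hB.1.2.1
  have hmvz := hmvB z hz
  have hn1 : 1 ≤ sampleSize A t := sampleSize_pos_of_ne hw hα hβ hαβ
  have hnacc_cb : ¬ Accessible (Bmoves A (sampleSize A t - 1)) c' β :=
    fun h => hcβ (hsing c' hc' β hβ h)
  obtain ⟨hmmv, hmp, hmn, hmdeg⟩ := construct_move hw hβ hc' hnacc_cb
  set m := natToInt β - natToInt c' with hm
  have hdegz : degOf z = sampleSize A t := by
    rcases hpn with ⟨h1, _⟩ | ⟨h1, _⟩
    · rw [show degOf z = ∑ i, posOf z i from rfl, h1, ← sampleSize_eq hw hβ]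
    · rw [show degOf z = ∑ i, posOf z i from rfl, h1, ← sampleSize_eq hw hα]
  have hnRab : ¬ Accessible (B \ {z}) α β := by
    intro hacc
    refine hB.2 (B \ {z}) (Set.sdiff_singleton_ssubset.mpr hz) ?_
    refine markov_of_replace hB.1 (hB.1.1.subset Set.diff_subset)
      (fun v hv => hmvB v hv.1) ?_
    intro z' hz' hnot
    have hz'' : z' = z := by
      by_contra hne'
      exact hnot ⟨hz', by simpa using hne'⟩
    subst hz''
    rcases hpn with ⟨h1, h2⟩ | ⟨h1, h2⟩
    · rw [h1, h2]; exact hacc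
    · rw [h1, h2]; exact accessible_symm hacc
  have hzm : z ≠ m := by
    intro h
    rcases hpn with ⟨_, h2⟩ | ⟨_, h2⟩
    · exact hcα (show c' = α by rw [← hmn, ← h, h2])
    · exact hcβ (show c' = β by rw [← hmn, ← h, h2])
  have hnzm : -z ≠ m := by
    intro h
    rcases hpn with ⟨h1, h2⟩ | ⟨h1, h2⟩
    · exact hαβ (show α = β by rw [← h2, ← posOf_neg, h, hmp])
    · exact hcα (show c' = α by rw [← hmn, ← h, negOf_neg, h1])
  set B₂ := insert m (B \ {z}) with hB₂
  have hmvB₂ : ∀ z' ∈ B₂, IsMove A z' := by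
    rintro z' (rfl | hz'); exacts [hmmv, hmvB z' hz'.1]
  have hfinB₂ : B₂.Finite := (hB.1.1.subset Set.diff_subset).insert m
  have hstepm : MStep B₂ c' β := ⟨m, Set.mem_insert m _, Or.inl (by rw [hm]; ring)⟩
  have hαβ₂ : Accessible B₂ α β :=
    (accessible_mono (Set.subset_insert m _) (accessible_symm hRca)).tail hstepm
  have hzend : Accessible B₂ (negOf z) (posOf z) := by
    rcases hpn with ⟨h1, h2⟩ | ⟨h1, h2⟩
    · rw [h1, h2]; exact hαβ₂
    · rw [h1, h2]; exact accessible_symm hαβ₂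
  have hB₂mar : IsMarkovBasis A B₂ := by
    refine markov_of_replace hB.1 hfinB₂ hmvB₂ ?_
    intro z' hz' hnot
    have hz'' : z' = z := by
      by_contra hne'
      exact hnot (Set.mem_insert_of_mem m ⟨hz', by simpa using hne'⟩)
    subst hz''; exact hzend
  have hmB : m ∉ B := by
    intro hmem
    have hm2 : m ∈ B \ {z} := ⟨hmem, by simpa using (Ne.symm hzm)⟩
    exact hnRab ((accessible_symm hRca).tail ⟨m, hm2, Or.inl (by rw [hm]; ring)⟩)
  have hB₂min : IsMinimalMarkovBasis A B₂ := by
    refine minimal_of_remove hB₂mar ?_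
    intro w' hw' hmar'
    rcases hw' with rfl | hw'B
    · have heq2 : B₂ \ {m} = B \ {z} := by
        rw [hB₂, Set.insert_diff_self_of_notMem]
        exact fun hc => hmB hc.1
      exact hB.2 (B \ {z}) (Set.sdiff_singleton_ssubset.mpr hz) (heq2 ▸ hmar')
    · have hww : w' ≠ z := fun h => hw'B.2 (by simp [h])
      have hzmem : z ∈ B \ {w'} := ⟨hz, by simpa using (Ne.symm hww)⟩
      have hmw : m ≠ w' := fun h => hmB (h ▸ hw'B.1)
      have hins : B₂ \ {w'} = insert m ((B \ {z}) \ {w'}) := by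
        rw [hB₂, Set.insert_diff_of_notMem]
        simpa using hmw
      have hQcb : Accessible (B \ {w'}) c' β := by
        by_contra hncb
        have hacc : Accessible (B₂ \ {w'}) α c' := hmar'.2.2 t α hα c' hc'
        rw [hins] at hacc
        have hdecomp := accessible_decomp hw
          (fun v hv => hmvB v hv.1.1) hmmv
          (by rw [hmdeg]) hα hacc
        rw [hmn, hmp] at hdecomp
        have hT := rtg_pair (fun a => Relation.ReflTransGen.refl)
          (fun h1 h2 => h1.trans h2) hdecomp
        have hsubT : ((B \ {z}) \ {w'}) ⊆ B \ {w'} := fun v hv => ⟨hv.1.1, hv.2⟩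
        rcases hT with hT | hT | hT
        · exact hncb ((accessible_symm (accessible_mono hsubT hT)).tail
            (mstep_pair hzmem hpn))
        · exact hncb ((accessible_symm (accessible_mono hsubT hT)).tail
            (mstep_pair hzmem hpn))
        · exact hnRab (accessible_mono (fun v hv => hv.1) hT)
      have hfin3 : (B \ {w'}).Finite := hB.1.1.subset Set.diff_subset
      have hmar3 : IsMarkovBasis A (B \ {w'}) := by
        refine markov_of_replace hmar' hfin3 (fun v hv => hmvB v hv.1) ?_
        intro z' hz' hnot
        have hz'm : z' = m := by
          rcases hz'.1 with rfl | hz''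
          · rfl
          · exact absurd ⟨hz''.1, hz'.2⟩ hnot
        subst hz'm
        rw [hmn, hmp]
        exact hQcb
      exact hB.2 (B \ {w'}) (Set.sdiff_singleton_ssubset.mpr hw'B.1) hmar3
  have hEq := huniq B B₂ hB hB₂min
  rcases hEq.1 z hz with hc | hc
  · rcases hc with hc | hc
    · exact hzm hc
    · exact hc.2 rfl
  · rcases hc with hc | hc
    · exact hnzm hc
    · exact neg_not_mem_minimal hB hz hc.1

end HomMain


section HomFinal

variable {w : Fin d → ℚ} (hw : ∀ i : Fin p, ∑ j, w j * (A j i : ℚ) = 1)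

include hw

lemma direction_mp
    (huniq : ∀ B₁ B₂ : Set (Fin p → ℤ), IsMinimalMarkovBasis A B₁ →
      IsMinimalMarkovBasis A B₂ → EqUpToSign B₁ B₂) :
    ∀ t : Fin d → ℤ, (fiberOf A t).Nonempty →
      ((∀ x ∈ fiberOf A t, ∀ y ∈ fiberOf A t,
          Accessible (Bmoves A (sampleSize A t - 1)) x y) ∨
        (fiberOf A t).encard = 2) := by
  intro t _
  by_contra hcon
  push_neg at hcon
  obtain ⟨h1, hcard⟩ := hcon
  obtain ⟨x₀, hx₀, y₀, hy₀, hnacc⟩ := h1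
  obtain ⟨B, hB⟩ := exists_minimal_markov hw
  by_cases hsing : ∀ u ∈ fiberOf A t, ∀ v ∈ fiberOf A t,
      Accessible (Bmoves A (sampleSize A t - 1)) u v → u = v
  · -- all classes are singletons
    have hxy : x₀ ≠ y₀ := fun h => hnacc (h ▸ Relation.ReflTransGen.refl)
    obtain ⟨z, hz, hpF, hnF, hpn_ne⟩ := exists_full_move hw hB.1 hx₀ hy₀ hxy hsing
    obtain ⟨c', hc'F, hc'⟩ : ∃ c' ∈ fiberOf A t,
        c' ∉ ({negOf z, posOf z} : Set (Fin p → ℕ)) := by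
      by_contra hcc
      push_neg at hcc
      apply hcard
      have heq : fiberOf A t = {negOf z, posOf z} :=
        Set.Subset.antisymm hcc (by rintro v (rfl | rfl); exacts [hnF, hpF])
      rw [heq, Set.encard_pair (Ne.symm hpn_ne)]
    have hne2 : c' ≠ negOf z ∧ c' ≠ posOf z := by
      constructor <;> intro h <;> apply hc' <;> simp [h]
    have hBeq : insert z (B \ {z}) = B := by
      rw [Set.insert_diff_singleton]
      exact Set.insert_eq_self.mpr hz
    have haccB : Accessible (insert z (B \ {z})) c' (negOf z) := by
      rw [hBeq]
      exact hB.1.2.2 t c' hc'F (negOf z) hnF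
    have hdz : degOf z = sampleSize A t := by
      rw [show degOf z = ∑ i, posOf z i from rfl, ← sampleSize_eq hw hpF]
    have hdecomp := accessible_decomp hw (fun v hv => hB.1.2.1 v hv.1)
      (hB.1.2.1 z hz) hdz hc'F haccB
    have hT := rtg_pair (fun a => Relation.ReflTransGen.refl)
      (fun h1 h2 => h1.trans h2) hdecomp
    rcases hT with hT | hT | hT
    · exact caseB_contra hw hB hz (Or.inl ⟨rfl, rfl⟩) hnF hpF (Ne.symm hpn_ne) hsing
        hc'F hne2.1 hne2.2 hT huniq
    · exact caseB_contra hw hB hz (Or.inl ⟨rfl, rfl⟩) hnF hpF (Ne.symm hpn_ne) hsing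
        hc'F hne2.1 hne2.2 hT huniq
    · exact caseB_contra hw hB hz (Or.inr ⟨rfl, rfl⟩) hpF hnF hpn_ne hsing
        hc'F hne2.2 hne2.1 hT huniq
  · -- some class has two elements
    push_neg at hsing
    obtain ⟨u, huF, v, hvF, hSuv, huv⟩ := hsing
    obtain ⟨y', hy'F, hnuy⟩ : ∃ y', y' ∈ fiberOf A t ∧
        ¬ Accessible (Bmoves A (sampleSize A t - 1)) u y' := by
      by_cases h : Accessible (Bmoves A (sampleSize A t - 1)) u x₀
      · exact ⟨y₀, hy₀, fun hc => hnacc ((accessible_symm h).trans hc)⟩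
      · exact ⟨x₀, hx₀, h⟩
    obtain ⟨z, hz, hpF, hnF, hnS, hend⟩ := exists_crossing hw hB.1 huF hy'F hnuy
    rcases hend with hSnu | hSpu
    · -- u is in the class of negOf z
      by_cases hcase : u = negOf z
      · refine caseA_contra hw hB hz (Or.inl ⟨rfl, rfl⟩) hnF hpF hnS hvF ?_ ?_ huniq
        · rw [← hcase]; exact accessible_symm hSuv
        · rw [← hcase]; exact Ne.symm huv
      · exact caseA_contra hw hB hz (Or.inl ⟨rfl, rfl⟩) hnF hpF hnS huF
          (accessible_symm hSnu) hcase huniq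
    · -- u is in the class of posOf z
      have hnS' : ¬ Accessible (Bmoves A (sampleSize A t - 1)) (posOf z) (negOf z) :=
        fun h => hnS (accessible_symm h)
      by_cases hcase : u = posOf z
      · refine caseA_contra hw hB hz (Or.inr ⟨rfl, rfl⟩) hpF hnF hnS' hvF ?_ ?_ huniq
        · rw [← hcase]; exact accessible_symm hSuv
        · rw [← hcase]; exact Ne.symm huv
      · exact caseA_contra hw hB hz (Or.inr ⟨rfl, rfl⟩) hpF hnF hnS' huF
          (accessible_symm hSpu) hcase huniq

end HomFinal


end MarkovAux
/-- a minimal Markov basis is unique up to sign iff every nonempty fiber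
forms a single `B_{|t|-1}`-equivalence class or has exactly two elements. -/
theorem minimalMarkovBasis_unique_iff
    {p d : ℕ} (hp : 0 < p) (hd : 0 < d)
    (A : Matrix (Fin d) (Fin p) ℤ) (hA : IsHomogeneousMatrix A) :
    (∀ B₁ B₂ : Set (Fin p → ℤ), IsMinimalMarkovBasis A B₁ → IsMinimalMarkovBasis A B₂ →
        EqUpToSign B₁ B₂) ↔
      ∀ t : Fin d → ℤ, (fiberOf A t).Nonempty →
        ((∀ x ∈ fiberOf A t, ∀ y ∈ fiberOf A t,
            Accessible (Bmoves A (sampleSize A t - 1)) x y) ∨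
          (fiberOf A t).encard = 2) := by
  obtain ⟨w, hw⟩ := hA
  constructor
  · intro huniq
    exact MarkovAux.direction_mp hw huniq
  · intro hRHS B₁ B₂ hB₁ hB₂
    exact ⟨fun z hz => MarkovAux.mem_or_neg_mem hw hRHS hB₁ hB₂ hz,
           fun z hz => MarkovAux.mem_or_neg_mem hw hRHS hB₂ hB₁ hz⟩
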